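/- Let μ := (1,0^{(2n-2)},−1) ∈ ℤ^{2n} and let μ_k ∈ ℤ^{2n} (0 ≤ k ≤ 2n) satisfy the basic inequalities for each k and ν_k := (μ_k − μ*_k)/2. Then the following are equivalent: (a) ν_k ∈ Conv(S*_{2n}·μ) for all 0 ≤ k ≤ n and ν_0, ν_n ∈ S*_{2n}·μ; (b) μ_k ∈ S_{2n}·μ ∪ {0} for all 0 ≤ k ≤ 2n and μ_0, μ_n ∈ S*_{2n}·μ. Here S_{2n}·μ is the set of vectors e_i − e_j with i ≠ j, and S*_{2n}·μ is the set of vectors e_j − e_{j*}. -/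
import Mathlib


/-- `rev n i = i*` where `i* = 2n+1-i` (0-based). -/
def rev (n : ℕ) (i : Fin (2 * n)) : Fin (2 * n) :=
  ⟨2 * n - 1 - i.val, by have := i.isLt; omega⟩

/-- standard basis vector of ℤ^{2n}. -/
def eZ (n : ℕ) (j : Fin (2 * n)) : Fin (2 * n) → ℤ := fun i => if i = j then 1 else 0

/-- standard basis vector of ℝ^{2n}. -/
def eR (n : ℕ) (j : Fin (2 * n)) : Fin (2 * n) → ℝ := fun i => if i = j then 1 else 0

/-- The orbit S_{2n}·μ of μ = e_1 - e_{2n}: all e_i - e_j with i ≠ j (over ℤ). -/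
def SOrb (n : ℕ) : Set (Fin (2 * n) → ℤ) :=
  {v | ∃ i j : Fin (2 * n), i ≠ j ∧ v = fun m => eZ n i m - eZ n j m}

/-- The orbit S*_{2n}·μ: all e_j - e_{j*} (over ℤ). -/
def SstarOrbZ (n : ℕ) : Set (Fin (2 * n) → ℤ) :=
  {v | ∃ j : Fin (2 * n), v = fun m => eZ n j m - eZ n (rev n j) m}

/-- The orbit S*_{2n}·μ: all e_j - e_{j*} (over ℝ). -/
def SstarOrbR (n : ℕ) : Set (Fin (2 * n) → ℝ) :=
  {v | ∃ j : Fin (2 * n), v = fun m => eR n j m - eR n (rev n j) m}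

lemma rev_rev (n : ℕ) (i : Fin (2 * n)) : rev n (rev n i) = i := by
  have := i.isLt; apply Fin.ext; simp only [rev]; omega

lemma rev_ne (n : ℕ) (i : Fin (2 * n)) : rev n i ≠ i := by
  have h := i.isLt
  intro h2
  have h3 : (rev n i).val = i.val := by rw [h2]
  simp only [rev] at h3
  omega

lemma rev_eq_iff (n : ℕ) (i j : Fin (2 * n)) : rev n i = j ↔ i = rev n j := by
  constructor
  · intro h; rw [← h, rev_rev]
  · intro h; rw [h, rev_rev]

def revEquiv (n : ℕ) : Equiv.Perm (Fin (2 * n)) :=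
  Function.Involutive.toPerm (rev n) (rev_rev n)

lemma sum_rev {M : Type*} [AddCommMonoid M] (n : ℕ) (f : Fin (2 * n) → M) :
    ∑ i, f (rev n i) = ∑ i, f i :=
  Equiv.sum_comp (revEquiv n) f

lemma abs_add_abs_eq (x y : ℤ) (h1 : -1 ≤ x + y) (h2 : x + y ≤ 1) :
    |x| + |y| = |x - y| := by
  rcases abs_cases x with ⟨hx, _⟩ | ⟨hx, _⟩ <;>
  rcases abs_cases y with ⟨hy, _⟩ | ⟨hy, _⟩ <;>
  rcases abs_cases (x - y) with ⟨hxy, _⟩ | ⟨hxy, _⟩ <;> omega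

lemma key (n : ℕ) (f : Fin (2 * n) → ℤ)
    (hs : ∀ i, -1 ≤ f i + f (rev n i) ∧ f i + f (rev n i) ≤ 1)
    (h0 : ∑ i, f i = 0)
    (hd : ∑ i, |f i - f (rev n i)| ≤ 4) :
    f ∈ SOrb n ∨ f = 0 := by
  have hsum_abs : ∑ i, |f i| ≤ 2 := by
    have h1 : ∑ i, (|f i| + |f (rev n i)|) = ∑ i, |f i - f (rev n i)| :=
      Finset.sum_congr rfl fun i _ => abs_add_abs_eq _ _ (hs i).1 (hs i).2
    have h2 : ∑ i, |f (rev n i)| = ∑ i, |f i| := sum_rev n (fun j => |f j|)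
    rw [Finset.sum_add_distrib, h2] at h1
    omega
  have habs1 : ∀ i, |f i| ≤ 1 := by
    intro i
    have hpair : |f i - f (rev n i)| + |f (rev n i) - f (rev n (rev n i))| ≤ 4 := by
      have h := Finset.sum_le_sum_of_subset_of_nonneg
        (Finset.subset_univ ({i, rev n i} : Finset (Fin (2*n))))
        (fun j _ _ => abs_nonneg (f j - f (rev n j)))
      rw [Finset.sum_pair (rev_ne n i).symm] at h
      exact le_trans h hd
    rw [rev_rev, abs_sub_comm (f (rev n i)) (f i)] at hpair
    have := hs i
    rcases abs_cases (f i) with ⟨hx, _⟩ | ⟨hx, _⟩ <;>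
    rcases abs_cases (f i - f (rev n i)) with ⟨hy, _⟩ | ⟨hy, _⟩ <;> omega
  by_cases hp : ∃ p, f p = 1
  · obtain ⟨p, hfp⟩ := hp
    have hq : ∃ q, f q = -1 := by
      by_contra hq
      push_neg at hq
      have hnn : ∀ i ∈ Finset.univ, 0 ≤ f i := fun i _ => by
        have h1 := habs1 i; have h2 := hq i
        rcases abs_cases (f i) with ⟨h3, _⟩ | ⟨h3, _⟩ <;> omega
      have := Finset.single_le_sum hnn (Finset.mem_univ p)
      omega
    obtain ⟨q, hfq⟩ := hq
    have hpq : p ≠ q := by intro h; rw [h, hfq] at hfp; omega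
    have hzero : ∀ r, r ≠ p → r ≠ q → f r = 0 := by
      intro r hrp hrq
      by_contra hr
      have h3 : |f p| + (|f q| + |f r|) ≤ ∑ i, |f i| := by
        have h := Finset.sum_le_sum_of_subset_of_nonneg
          (Finset.subset_univ ({p, q, r} : Finset (Fin (2*n))))
          (fun j _ _ => abs_nonneg (f j))
        rwa [Finset.sum_insert (by simp [hpq, Ne.symm hrp]),
          Finset.sum_pair (Ne.symm hrq)] at h
      have h4 : |f r| ≥ 1 := by
        have := habs1 r
        rcases abs_cases (f r) with ⟨h5, _⟩ | ⟨h5, _⟩ <;> omega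
      rw [hfp, hfq] at h3
      simp at h3
      omega
    left
    refine ⟨p, q, hpq, funext fun m => ?_⟩
    by_cases hmp : m = p
    · subst hmp; simp [eZ, hpq, hfp]
    · by_cases hmq : m = q
      · subst hmq; simp [eZ, hmp, hfq]
      · simp [eZ, hmp, hmq, hzero m hmp hmq]
  · right
    push_neg at hp
    have hnn : ∀ i ∈ Finset.univ, 0 ≤ -f i := fun i _ => by
      have h1 := habs1 i; have h2 := hp i
      rcases abs_cases (f i) with ⟨h3, _⟩ | ⟨h3, _⟩ <;> omega
    have hsum' : ∑ i, -f i = 0 := by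
      rw [Finset.sum_neg_distrib, h0, neg_zero]
    have hz := (Finset.sum_eq_zero_iff_of_nonneg hnn).1 hsum'
    funext i
    have := hz i (Finset.mem_univ i)
    simp only [Pi.zero_apply]
    omega

lemma sum_abs_orb (n : ℕ) {v : Fin (2 * n) → ℝ} (hv : v ∈ SstarOrbR n) :
    ∑ i, |v i| ≤ 2 := by
  obtain ⟨j, rfl⟩ := hv
  have hne := rev_ne n j
  have heq : ∀ i, |eR n j i - eR n (rev n j) i| = eR n j i + eR n (rev n j) i := by
    intro i
    by_cases h1 : i = j
    · subst h1; simp [eR, Ne.symm hne]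
    · by_cases h2 : i = rev n j <;> simp [eR, h1, h2, hne]
  rw [Finset.sum_congr rfl (fun i _ => heq i), Finset.sum_add_distrib]
  simp [eR, Finset.sum_ite_eq']
  norm_num

lemma hull_bound (n : ℕ) {v : Fin (2 * n) → ℝ}
    (hv : v ∈ convexHull ℝ (SstarOrbR n)) : ∑ i, |v i| ≤ 2 := by
  have hconv : Convex ℝ {w : Fin (2 * n) → ℝ | ∑ i, |w i| ≤ 2} := by
    intro x hx y hy a b ha hb hab
    simp only [Set.mem_setOf_eq] at *
    calc ∑ i, |(a • x + b • y) i| ≤ ∑ i, (a * |x i| + b * |y i|) := by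
          apply Finset.sum_le_sum
          intro i _
          simp only [Pi.add_apply, Pi.smul_apply, smul_eq_mul]
          calc |a * x i + b * y i| ≤ |a * x i| + |b * y i| := abs_add_le _ _
            _ = a * |x i| + b * |y i| := by
                rw [abs_mul, abs_mul, abs_of_nonneg ha, abs_of_nonneg hb]
      _ = a * ∑ i, |x i| + b * ∑ i, |y i| := by
          rw [Finset.sum_add_distrib, ← Finset.mul_sum, ← Finset.mul_sum]
      _ ≤ a * 2 + b * 2 := by gcongr
      _ = 2 := by linarith
  exact convexHull_min (fun w hw => sum_abs_orb n hw) hconv hv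

lemma nu_mem_hull (n : ℕ) (hn : 1 ≤ n) (f : Fin (2 * n) → ℤ) (v : Fin (2 * n) → ℝ)
    (hv : v = fun i => ((f i : ℝ) - f (rev n i)) / 2)
    (hf : f ∈ SOrb n ∨ f = 0) : v ∈ convexHull ℝ (SstarOrbR n) := by
  have hc := convex_convexHull ℝ (SstarOrbR n)
  have hsub := subset_convexHull ℝ (SstarOrbR n)
  rcases hf with ⟨p, q, hpq, hf⟩ | hf
  · have hu : (fun m => eR n p m - eR n (rev n p) m) ∈ SstarOrbR n := ⟨p, rfl⟩
    have hw : (fun m => eR n (rev n q) m - eR n (rev n (rev n q)) m) ∈ SstarOrbR n :=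
      ⟨rev n q, rfl⟩
    have hcomb := hc (hsub hu) (hsub hw) (by norm_num : (0:ℝ) ≤ 1/2)
      (by norm_num : (0:ℝ) ≤ 1/2) (by norm_num : (1:ℝ)/2 + 1/2 = 1)
    convert hcomb using 1
    funext i
    rw [hv, hf]
    simp only [Pi.add_apply, Pi.smul_apply, smul_eq_mul, rev_rev, eZ, eR, rev_eq_iff]
    push_cast [apply_ite (fun x : ℤ => (x : ℝ))]
    split_ifs <;> norm_num
  · have hj0 : (0 : ℕ) < 2 * n := by omega
    set j0 : Fin (2 * n) := ⟨0, hj0⟩ with hj0def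
    have hu : (fun m => eR n j0 m - eR n (rev n j0) m) ∈ SstarOrbR n := ⟨j0, rfl⟩
    have hw : (fun m => eR n (rev n j0) m - eR n (rev n (rev n j0)) m) ∈ SstarOrbR n :=
      ⟨rev n j0, rfl⟩
    have hcomb := hc (hsub hu) (hsub hw) (by norm_num : (0:ℝ) ≤ 1/2)
      (by norm_num : (0:ℝ) ≤ 1/2) (by norm_num : (1:ℝ)/2 + 1/2 = 1)
    convert hcomb using 1
    funext i
    rw [hv, hf]
    simp only [Pi.add_apply, Pi.smul_apply, smul_eq_mul, rev_rev, Pi.zero_apply]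
    push_cast
    ring

lemma nu_mem_orb (n : ℕ) (f : Fin (2 * n) → ℤ) (v : Fin (2 * n) → ℝ)
    (hv : v = fun i => ((f i : ℝ) - f (rev n i)) / 2)
    (hf : f ∈ SstarOrbZ n) : v ∈ SstarOrbR n := by
  obtain ⟨j, hj⟩ := hf
  refine ⟨j, ?_⟩
  rw [hv]
  funext i
  simp only [hj, eZ, eR, rev_eq_iff, rev_rev]
  push_cast [apply_ite (fun x : ℤ => (x : ℝ))]
  split_ifs <;> norm_num

lemma dual_transfer (n : ℕ) (f g : Fin (2 * n) → ℤ)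
    (hg : ∀ i, g i = - f (rev n i)) (hf : f ∈ SOrb n ∨ f = 0) :
    g ∈ SOrb n ∨ g = 0 := by
  rcases hf with ⟨p, q, hpq, hf⟩ | hf
  · left
    refine ⟨rev n q, rev n p, fun h => hpq ?_, funext fun m => ?_⟩
    · have h2 := congrArg (rev n) h
      rw [rev_rev, rev_rev] at h2
      exact h2.symm
    · rw [hg m, hf]
      simp only [eZ, rev_eq_iff]
      ring
  · right
    funext m
    rw [hg m, hf]
    simp

lemma s_eq_zero (n : ℕ) (f : Fin (2 * n) → ℤ)
    (h : ∀ i, 0 ≤ f i + f (rev n i) ∧ f i + f (rev n i) ≤ 1)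
    (h0 : ∑ i, f i = 0) : ∀ i, f (rev n i) = -f i := by
  have hsum : ∑ i, (f i + f (rev n i)) = 0 := by
    rw [Finset.sum_add_distrib, (sum_rev n f : ∑ i, f (rev n i) = ∑ i, f i), h0]
    ring
  have hz := (Finset.sum_eq_zero_iff_of_nonneg (fun i _ => (h i).1)).1 hsum
  intro i
  have := hz i (Finset.mem_univ i)
  omega

lemma s_eq_zero' (n : ℕ) (f : Fin (2 * n) → ℤ)
    (h : ∀ i, -1 ≤ f i + f (rev n i) ∧ f i + f (rev n i) ≤ 0)
    (h0 : ∑ i, f i = 0) : ∀ i, f (rev n i) = -f i := by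
  have h2 := s_eq_zero n (fun i => -f i)
    (fun i => by
      show 0 ≤ -f i + -f (rev n i) ∧ -f i + -f (rev n i) ≤ 1
      have := h i; omega)
    (by rw [Finset.sum_neg_distrib, h0, neg_zero])
  intro i
  have h3 : -f (rev n i) = -(-f i) := h2 i
  omega

lemma nu_int (n : ℕ) (f : Fin (2 * n) → ℤ) (v : Fin (2 * n) → ℝ)
    (hv : v = fun i => ((f i : ℝ) - f (rev n i)) / 2)
    (hanti : ∀ i, f (rev n i) = -f i)
    (hmem : v ∈ SstarOrbR n) : f ∈ SstarOrbZ n := by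
  obtain ⟨j, hj⟩ := hmem
  subst hv
  refine ⟨j, funext fun i => ?_⟩
  have h1 : ((f i : ℝ) - (f (rev n i) : ℝ)) / 2 = eR n j i - eR n (rev n j) i :=
    congrFun hj i
  rw [hanti i] at h1
  have h2 : (f i : ℝ) = eR n j i - eR n (rev n j) i := by
    rw [← h1]; push_cast; ring
  have hne := rev_ne n j
  by_cases hij : i = j
  · subst hij
    simp only [eR, eZ, if_pos rfl, if_neg (Ne.symm hne)] at h2 ⊢
    exact_mod_cast h2
  · by_cases hij2 : i = rev n j
    · subst hij2
      simp only [eR, eZ, if_pos rfl, if_neg hne] at h2 ⊢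
      exact_mod_cast h2
    · simp only [eR, eZ, if_neg hij, if_neg hij2] at h2 ⊢
      exact_mod_cast h2

theorem stmt9 (n : ℕ) (hn : 2 ≤ n)
    (μ : ℕ → Fin (2 * n) → ℤ)
    (hineqA : ∀ k ≤ n, ∀ i : Fin (2 * n), (i.val < k ∨ 2 * n - k ≤ i.val) →
      -1 ≤ μ k i + μ k (rev n i) ∧ μ k i + μ k (rev n i) ≤ 0)
    (hineqB : ∀ k ≤ n, ∀ i : Fin (2 * n), (k ≤ i.val ∧ i.val < 2 * n - k) →
      0 ≤ μ k i + μ k (rev n i) ∧ μ k i + μ k (rev n i) ≤ 1)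
    (hsum : ∀ k ≤ 2 * n, ∑ i, μ k i = 0)
    (hdual : ∀ k ≤ 2 * n, ∀ i, μ k i + μ (2 * n - k) (rev n i) = 0)
    (hper : μ (2 * n) = μ 0)
    (ν : ℕ → Fin (2 * n) → ℝ)
    (hν : ∀ k, ν k = fun i => ((μ k i : ℝ) - μ k (rev n i)) / 2) :
    ((∀ k ≤ n, ν k ∈ convexHull ℝ (SstarOrbR n)) ∧
      ν 0 ∈ SstarOrbR n ∧ ν n ∈ SstarOrbR n) ↔
    ((∀ k ≤ 2 * n, μ k ∈ SOrb n ∨ μ k = 0) ∧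
      μ 0 ∈ SstarOrbZ n ∧ μ n ∈ SstarOrbZ n) := by
  have hn1 : 1 ≤ n := by omega
  have hanti0 : ∀ i, μ 0 (rev n i) = -μ 0 i := by
    apply s_eq_zero n (μ 0) ?_ (hsum 0 (by omega))
    intro i
    exact hineqB 0 (by omega) i ⟨Nat.zero_le _, by have := i.isLt; omega⟩
  have hantin : ∀ i, μ n (rev n i) = -μ n i := by
    apply s_eq_zero' n (μ n) ?_ (hsum n (by omega))
    intro i
    exact hineqA n le_rfl i (by have := i.isLt; omega)
  constructor
  · rintro ⟨hhull, hv0, hvn⟩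
    have hb : ∀ k ≤ n, μ k ∈ SOrb n ∨ μ k = 0 := by
      intro k hk
      apply key n (μ k)
      · intro i
        by_cases h : k ≤ i.val ∧ i.val < 2 * n - k
        · have := hineqB k hk i h
          omega
        · have h2 : i.val < k ∨ 2 * n - k ≤ i.val := by have := i.isLt; omega
          have := hineqA k hk i h2
          omega
      · exact hsum k (by omega)
      · have h2 := hull_bound n (hhull k hk)
        rw [hν k] at h2
        simp only [] at h2
        have h3 : ∑ i, |(μ k i : ℝ) - (μ k (rev n i) : ℝ)| ≤ 4 := by
          have heq : ∀ i : Fin (2 * n), |(μ k i : ℝ) - (μ k (rev n i) : ℝ)| =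
              2 * |((μ k i : ℝ) - (μ k (rev n i) : ℝ)) / 2| := by
            intro i
            rw [abs_div, abs_two]
            ring
          rw [Finset.sum_congr rfl (fun i _ => heq i), ← Finset.mul_sum]
          linarith
        have h4 : ((∑ i, |μ k i - μ k (rev n i)| : ℤ) : ℝ) ≤ 4 := by
          push_cast
          exact h3
        exact_mod_cast h4
    refine ⟨?_, nu_int n (μ 0) (ν 0) (hν 0) hanti0 hv0,
      nu_int n (μ n) (ν n) (hν n) hantin hvn⟩
    intro k hk
    by_cases hkn : k ≤ n
    · exact hb k hkn
    · have hk' : 2 * n - k ≤ n := by omega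
      have hg : ∀ i, μ k i = -μ (2 * n - k) (rev n i) := by
        intro i
        have h := hdual (2 * n - k) (by omega) (rev n i)
        rw [rev_rev] at h
        have hkk : 2 * n - (2 * n - k) = k := by omega
        rw [hkk] at h
        omega
      exact dual_transfer n (μ (2 * n - k)) (μ k) hg (hb (2 * n - k) hk')
  · rintro ⟨hb, h0, hn'⟩
    exact ⟨fun k hk => nu_mem_hull n hn1 (μ k) (ν k) (hν k) (hb k (by omega)),
      nu_mem_orb n (μ 0) (ν 0) (hν 0) h0,
      nu_mem_orb n (μ n) (ν n) (hν n) hn'⟩
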